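/- For the weighted leximin gain function φ(x,i) = (−x_i/w_i, −w_i) with positive weights w_i, condition (G1) holds: for x ∈ ℤ_{≥0}^n, i ≠ j, y = x + e_i, z = x + e_j, if φ(x,i) > φ(x,j) lexicographically, then the sorted vector of (y_h/w_h)_h lexicographically dominates the sorted vector of (z_h/w_h)_h; and if φ(x,i) = φ(x,j), the two sorted weighted vectors are equal. -/

import Mathlib

/-- `x` sorted in ascending order. -/
noncomputable def sortv {n : ℕ} (x : Fin n → ℝ) : Fin n → ℝ := x ∘ Tuple.sort x

/-- `a` lexicographically dominates `b`. -/
def LexDom {n : ℕ} (a b : Fin n → ℝ) : Prop :=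
  ∃ k : Fin n, (∀ j : Fin n, j < k → a j = b j) ∧ b k < a k

/-- count of coordinates ≤ t -/
noncomputable def cnt {n : ℕ} (v : Fin n → ℝ) (t : ℝ) : ℕ :=
  (Finset.univ.filter (fun h => v h ≤ t)).card

lemma cnt_eq_sum {n : ℕ} (v : Fin n → ℝ) (t : ℝ) :
    cnt v t = ∑ h : Fin n, (if v h ≤ t then 1 else 0) := by
  unfold cnt
  rw [Finset.card_filter]

lemma cnt_le {n : ℕ} (v : Fin n → ℝ) (t : ℝ) : cnt v t ≤ n := by
  classical
  calc cnt v t ≤ (Finset.univ : Finset (Fin n)).card := Finset.card_filter_le _ _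
  _ = n := by simp

lemma cnt_mono {n : ℕ} (v : Fin n → ℝ) {s t : ℝ} (hst : s ≤ t) : cnt v s ≤ cnt v t := by
  classical
  apply Finset.card_le_card
  intro h hh
  simp only [Finset.mem_filter, Finset.mem_univ, true_and] at hh ⊢
  linarith

lemma cnt_comp_perm {n : ℕ} (v : Fin n → ℝ) (σ : Equiv.Perm (Fin n)) (t : ℝ) :
    cnt (v ∘ σ) t = cnt v t := by
  classical
  rw [cnt_eq_sum, cnt_eq_sum]
  exact Equiv.sum_comp σ (fun h => if v h ≤ t then 1 else 0)

lemma sortv_mono {n : ℕ} (v : Fin n → ℝ) : Monotone (sortv v) :=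
  Tuple.monotone_sort v

lemma sortv_le_iff {n : ℕ} (v : Fin n → ℝ) (k : Fin n) (t : ℝ) :
    sortv v k ≤ t ↔ (k : ℕ) + 1 ≤ cnt v t := by
  classical
  have h := Tuple.lt_card_le_iff_apply_le_of_monotone (f := sortv v) (a := t) (j := k) (sortv_mono v)
  have hcard : (Finset.univ.filter fun i => sortv v i ≤ t).card = cnt v t := by
    have : cnt (sortv v) t = cnt v t := cnt_comp_perm v (Tuple.sort v) t
    exact this
  rw [hcard] at h
  rw [← h]
  omega

/-- If counting functions agree, sorted vectors agree. -/
lemma sortv_eq_of_cnt {n : ℕ} (a b : Fin n → ℝ) (h : ∀ t, cnt a t = cnt b t) :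
    sortv a = sortv b := by
  funext k
  apply le_antisymm
  · rw [sortv_le_iff, h]
    rw [← sortv_le_iff]
  · rw [sortv_le_iff, ← h]
    rw [← sortv_le_iff]

/-- Main abstract lemma: if counts agree strictly below `t₀` and `b` has exactly one more
element ≤ `t₀` than `a`, then the sorted `a` lex-dominates the sorted `b`. -/
lemma lexDom_of_cnt {n : ℕ} (a b : Fin n → ℝ) (t₀ : ℝ)
    (H1 : ∀ t, t < t₀ → cnt a t = cnt b t)
    (H2 : cnt a t₀ + 1 = cnt b t₀) :
    LexDom (sortv a) (sortv b) := by
  have hkn : cnt a t₀ < n := by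
    have := cnt_le b t₀
    omega
  refine ⟨⟨cnt a t₀, hkn⟩, ?_, ?_⟩
  · intro j hj
    have hjk : (j : ℕ) < cnt a t₀ := hj
    apply le_antisymm
    · -- sortv a j ≤ sortv b j
      have hb : (j : ℕ) + 1 ≤ cnt b (sortv b j) := by
        rw [← sortv_le_iff]
      rcases lt_or_ge (sortv b j) t₀ with hlt | hge
      · rw [sortv_le_iff, H1 _ hlt]; exact hb
      · rw [sortv_le_iff]
        calc (j : ℕ) + 1 ≤ cnt a t₀ := hjk
        _ ≤ cnt a (sortv b j) := cnt_mono a hge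
    · -- sortv b j ≤ sortv a j
      have ha : (j : ℕ) + 1 ≤ cnt a (sortv a j) := by
        rw [← sortv_le_iff]
      rcases lt_or_ge (sortv a j) t₀ with hlt | hge
      · rw [sortv_le_iff, ← H1 _ hlt]; exact ha
      · rw [sortv_le_iff]
        have : (j : ℕ) + 1 ≤ cnt b t₀ := by omega
        calc (j : ℕ) + 1 ≤ cnt b t₀ := this
        _ ≤ cnt b (sortv a j) := cnt_mono b hge
  · -- sortv b k ≤ t₀ < sortv a k
    have hb : sortv b ⟨cnt a t₀, hkn⟩ ≤ t₀ := by
      rw [sortv_le_iff]; simp; omega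
    have ha : ¬ sortv a ⟨cnt a t₀, hkn⟩ ≤ t₀ := by
      rw [sortv_le_iff]; simp
    linarith [lt_of_not_ge ha]

/-- Sum decomposition over two distinguished coordinates. -/
lemma sum_pair_congr {n : ℕ} (i j : Fin n) (hij : i ≠ j) (f g : Fin n → ℕ) (c : ℕ)
    (hfg : ∀ h, h ≠ i → h ≠ j → f h = g h)
    (hpair : f i + f j + c = g i + g j) :
    (∑ h, f h) + c = ∑ h, g h := by
  classical
  have hjmem : j ∈ (Finset.univ : Finset (Fin n)).erase i :=
    Finset.mem_erase.mpr ⟨hij.symm, Finset.mem_univ j⟩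
  have hf : ∑ h, f h = f i + (f j + ∑ h ∈ ((Finset.univ : Finset (Fin n)).erase i).erase j, f h) := by
    rw [Finset.add_sum_erase _ f hjmem, Finset.add_sum_erase _ f (Finset.mem_univ i)]
  have hg : ∑ h, g h = g i + (g j + ∑ h ∈ ((Finset.univ : Finset (Fin n)).erase i).erase j, g h) := by
    rw [Finset.add_sum_erase _ g hjmem, Finset.add_sum_erase _ g (Finset.mem_univ i)]
  have htail : ∑ h ∈ ((Finset.univ : Finset (Fin n)).erase i).erase j, f h
      = ∑ h ∈ ((Finset.univ : Finset (Fin n)).erase i).erase j, g h := by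
    apply Finset.sum_congr rfl
    intro h hh
    simp only [Finset.mem_erase] at hh
    exact hfg h hh.2.1 hh.1
  omega

theorem weighted_leximin_G1 {n : ℕ} (w : Fin n → ℝ) (hw : ∀ h, 0 < w h)
    (x : Fin n → ℕ) (i j : Fin n) (hij : i ≠ j)
    (y z : Fin n → ℕ)
    (hy : y = Function.update x i (x i + 1))
    (hz : z = Function.update x j (x j + 1)) :
    -- φ(x,i) > φ(x,j) lexicographically implies sorted weighted vector of y dominates z:
    (((x i : ℝ) / w i < (x j : ℝ) / w j ∨
        ((x i : ℝ) / w i = (x j : ℝ) / w j ∧ w i < w j)) →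
      LexDom (sortv (fun h => (y h : ℝ) / w h)) (sortv (fun h => (z h : ℝ) / w h))) ∧
    -- φ(x,i) = φ(x,j) implies the two sorted weighted vectors are equal:
    (((x i : ℝ) / w i = (x j : ℝ) / w j ∧ w i = w j) →
      sortv (fun h => (y h : ℝ) / w h) = sortv (fun h => (z h : ℝ) / w h)) := by
  classical
  set u : Fin n → ℝ := fun h => (x h : ℝ) / w h with hu
  set y' : Fin n → ℝ := fun h => (y h : ℝ) / w h with hy'
  set z' : Fin n → ℝ := fun h => (z h : ℝ) / w h with hz'
  have hwi : 0 < w i := hw i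
  have hwj : 0 < w j := hw j
  have hyi : y' i = u i + 1 / w i := by
    simp only [hy', hy, hu, Function.update_self]
    push_cast
    rw [add_div]
  have hyh : ∀ h, h ≠ i → y' h = u h := by
    intro h hh
    simp only [hy', hy, hu, Function.update_of_ne hh]
  have hzj : z' j = u j + 1 / w j := by
    simp only [hz', hz, hu, Function.update_self]
    push_cast
    rw [add_div]
  have hzh : ∀ h, h ≠ j → z' h = u h := by
    intro h hh
    simp only [hz', hz, hu, Function.update_of_ne hh]
  have hyj : y' j = u j := hyh j (Ne.symm hij)
  have hzi : z' i = u i := hzh i hij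
  have hdi : 0 < 1 / w i := by positivity
  have hdj : 0 < 1 / w j := by positivity
  -- generic counting comparison tool
  have key : ∀ t₀ : ℝ, (∀ t, t < t₀ →
        ((if y' i ≤ t then 1 else 0) + (if y' j ≤ t then 1 else 0) : ℕ)
          = (if z' i ≤ t then 1 else 0) + (if z' j ≤ t then 1 else 0)) →
      (((if y' i ≤ t₀ then 1 else 0) + (if y' j ≤ t₀ then 1 else 0) + 1 : ℕ)
          = (if z' i ≤ t₀ then 1 else 0) + (if z' j ≤ t₀ then 1 else 0)) →
      LexDom (sortv y') (sortv z') := by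
    intro t₀ hlo hhi
    apply lexDom_of_cnt y' z' t₀
    · intro t ht
      rw [cnt_eq_sum, cnt_eq_sum]
      have h0 := sum_pair_congr i j hij (fun h => if y' h ≤ t then 1 else 0)
        (fun h => if z' h ≤ t then 1 else 0) 0
        (fun h h1 h2 => by simp only [hyh h h1, hzh h h2])
        (by have := hlo t ht; omega)
      simpa using h0
    · rw [cnt_eq_sum, cnt_eq_sum]
      exact sum_pair_congr i j hij (fun h => if y' h ≤ t₀ then 1 else 0)
        (fun h => if z' h ≤ t₀ then 1 else 0) 1
        (fun h h1 h2 => by simp only [hyh h h1, hzh h h2]) hhi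
  constructor
  · rintro (hcase | ⟨heq, hwlt⟩)
    · -- u i < u j : take t₀ = u i
      have hcase' : u i < u j := hcase
      apply key (u i)
      · intro t ht
        rw [hyi, hyj, hzi, hzj]
        have h1 : ¬ (u i + 1 / w i ≤ t) := by linarith
        have h2 : ¬ (u j ≤ t) := by linarith
        have h3 : ¬ (u i ≤ t) := by linarith
        have h4 : ¬ (u j + 1 / w j ≤ t) := by linarith
        rw [if_neg h1, if_neg h2, if_neg h3, if_neg h4]
      · rw [hyi, hyj, hzi, hzj]
        have h1 : ¬ (u i + 1 / w i ≤ u i) := by linarith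
        have h2 : ¬ (u j ≤ u i) := by linarith
        have h4 : ¬ (u j + 1 / w j ≤ u i) := by linarith
        rw [if_neg h1, if_neg h2, if_pos (le_refl (u i)), if_neg h4]
    · -- u i = u j, w i < w j : take t₀ = u j + 1 / w j
      have heq' : u i = u j := heq
      have hd : 1 / w j < 1 / w i := by
        apply one_div_lt_one_div_of_lt hwi hwlt
      apply key (u j + 1 / w j)
      · intro t ht
        rw [hyi, hyj, hzi, hzj, heq']
        have h1 : ¬ (u j + 1 / w i ≤ t) := by linarith
        have h4 : ¬ (u j + 1 / w j ≤ t) := by linarith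
        rw [if_neg h1, if_neg h4]
        omega
      · rw [hyi, hyj, hzi, hzj, heq']
        have h1 : ¬ (u j + 1 / w i ≤ u j + 1 / w j) := by linarith
        have h2 : u j ≤ u j + 1 / w j := by linarith
        rw [if_neg h1, if_pos h2, if_pos (le_refl (u j + 1 / w j))]
  · rintro ⟨heq, hweq⟩
    have huij : u i = u j := heq
    have hswap : y' = z' ∘ (Equiv.swap i j) := by
      funext h
      rcases eq_or_ne h i with h1 | h1
      · rw [h1]
        simp only [Function.comp_apply, Equiv.swap_apply_left]
        rw [hyi, hzj, huij, hweq]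
      · rcases eq_or_ne h j with h2 | h2
        · rw [h2]
          simp only [Function.comp_apply, Equiv.swap_apply_right]
          rw [hyj, hzi]
          exact huij.symm
        · simp only [Function.comp_apply, Equiv.swap_apply_of_ne_of_ne h1 h2]
          rw [hyh h h1, hzh h h2]
    apply sortv_eq_of_cnt
    intro t
    rw [hswap]
    exact cnt_comp_perm z' (Equiv.swap i j) t
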